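/- arXiv:1512.00780 — 4 statements merged into one kernel-verified Lean document; each statement's English description precedes it below -/
import Mathlib

section
/- Let P and Q be coprime polynomials with integer coefficients of degrees at most m and n respectively, and let ξ be a real number with ξ·P(ξ)·Q(ξ) ≠ 0. Then there exists a constant c > 0 depending only on m, n, ξ such that either |P(ξ)| ≥ c·H(P)^{-(n-1)}·H(Q)^{-m} or |Q(ξ)| ≥ c·H(P)^{-n}·H(Q)^{-(m-1)}. -/
open Polynomial Filter

/-- Height of an integer polynomial: the maximum absolute value of its coefficients. -/
noncomputable def polyHeight (P : Polynomial ℤ) : ℝ :=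
  ((P.support.sup fun i => (P.coeff i).natAbs : ℕ) : ℝ)

/-- `P` and `Q` have no common non-constant factor in `ℤ[X]`. -/
def CoprimePoly (P Q : Polynomial ℤ) : Prop :=
  ∀ d : Polynomial ℤ, d ∣ P → d ∣ Q → d.natDegree = 0

/-- The exponent `w_n(ξ)`. -/
noncomputable def wExp (n : ℕ) (ξ : ℝ) : EReal :=
  sSup {x : EReal | ∃ w : ℝ, x = (w : EReal) ∧
    {P : Polynomial ℤ | P.natDegree ≤ n ∧ 0 < |Polynomial.aeval ξ P| ∧
      |Polynomial.aeval ξ P| ≤ (polyHeight P) ^ (-w)}.Infinite}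

/-- The uniform exponent `ŵ_n(ξ)`. -/
noncomputable def whExp (n : ℕ) (ξ : ℝ) : EReal :=
  sSup {x : EReal | ∃ w : ℝ, x = (w : EReal) ∧
    ∀ᶠ H : ℝ in atTop, ∃ P : Polynomial ℤ, P.natDegree ≤ n ∧ polyHeight P ≤ H ∧
      0 < |Polynomial.aeval ξ P| ∧ |Polynomial.aeval ξ P| ≤ H ^ (-w)}

/-- The exponent `w*_n(ξ)` of approximation by algebraic numbers of degree at most `n`;
the height of an algebraic number is the height of its irreducible defining polynomial. -/
noncomputable def wStarExp (n : ℕ) (ξ : ℝ) : EReal :=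
  sSup {x : EReal | ∃ w : ℝ, x = (w : EReal) ∧
    {α : ℝ | ∃ P : Polynomial ℤ, Irreducible P ∧ Polynomial.aeval α P = 0 ∧
      P.natDegree ≤ n ∧ 0 < |ξ - α| ∧ |ξ - α| ≤ (polyHeight P) ^ (-w - 1)}.Infinite}

/-- The uniform exponent `ŵ*_n(ξ)`. -/
noncomputable def whStarExp (n : ℕ) (ξ : ℝ) : EReal :=
  sSup {x : EReal | ∃ w : ℝ, x = (w : EReal) ∧
    ∀ᶠ H : ℝ in atTop, ∃ α : ℝ, ∃ P : Polynomial ℤ, Irreducible P ∧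
      Polynomial.aeval α P = 0 ∧ P.natDegree ≤ n ∧ polyHeight P ≤ H ∧
      0 < |ξ - α| ∧ |ξ - α| ≤ (polyHeight P)⁻¹ * H ^ (-w)}

/-! ### Auxiliary machinery for `stmt0` -/

/-- natural-number height of an integer polynomial -/
def heightNat (P : Polynomial ℤ) : ℕ := P.support.sup fun i => (P.coeff i).natAbs

lemma coeff_natAbs_le (P : Polynomial ℤ) (t : ℕ) : (P.coeff t).natAbs ≤ heightNat P := by
  by_cases h : t ∈ P.support
  · exact Finset.le_sup (f := fun i => (P.coeff i).natAbs) h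
  · simp [Polynomial.notMem_support_iff.mp h]

lemma one_le_heightNat {P : Polynomial ℤ} (hP : P ≠ 0) : 1 ≤ heightNat P := by
  obtain ⟨t, ht⟩ := Finset.nonempty_iff_ne_empty.mpr (mt Polynomial.support_eq_empty.mp hP)
  calc 1 ≤ (P.coeff t).natAbs := by
        have := Polynomial.mem_support_iff.mp ht
        omega
    _ ≤ _ := Finset.le_sup (f := fun i => (P.coeff i).natAbs) ht

lemma polyHeight_eq (P : Polynomial ℤ) : polyHeight P = (heightNat P : ℝ) := rfl

noncomputable def vecPoly {R : Type*} [CommRing R] (N : ℕ) (f : Fin N → R) : R[X] :=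
  ∑ i : Fin N, C (f i) * X ^ (i : ℕ)

lemma vecPoly_coeff {R : Type*} [CommRing R] (N : ℕ) (f : Fin N → R) (t : Fin N) :
    (vecPoly N f).coeff (t : ℕ) = f t := by
  rw [vecPoly, Polynomial.finset_sum_coeff]
  simp only [Polynomial.coeff_C_mul, Polynomial.coeff_X_pow]
  rw [Finset.sum_eq_single t]
  · simp
  · intro b _ hb
    rw [if_neg, mul_zero]
    exact fun h => hb (Fin.ext h.symm)
  · simp

lemma vecPoly_natDegree_le {R : Type*} [CommRing R] (N : ℕ) (f : Fin N → R) :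
    (vecPoly N f).natDegree ≤ N - 1 := by
  apply Polynomial.natDegree_sum_le_of_forall_le
  intro i _
  exact (Polynomial.natDegree_C_mul_X_pow_le _ _).trans (by omega)

lemma vecPoly_map {R S : Type*} [CommRing R] [CommRing S] (g : R →+* S) (N : ℕ) (f : Fin N → R) :
    (vecPoly N f).map g = vecPoly N (fun i => g (f i)) := by
  simp [vecPoly, Polynomial.map_sum]

lemma vecPoly_smul {R : Type*} [CommRing R] (N : ℕ) (a : R) (f : Fin N → R) :
    vecPoly N (fun i => a * f i) = C a * vecPoly N f := by
  simp [vecPoly, Finset.mul_sum, C_mul, mul_assoc]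

lemma vecPoly_aeval (N : ℕ) (f : Fin N → ℤ) (ξ : ℝ) :
    Polynomial.aeval ξ (vecPoly N f) = ∑ i : Fin N, (f i : ℝ) * ξ ^ (i : ℕ) := by
  simp [vecPoly]

/-- Sylvester-style matrix: row `r` is the coefficient of degree `finSumFinEquiv r`,
column `inl i` is `P * X^i`, column `inr j` is `Q * X^j`. -/
noncomputable def sylv {R : Type*} [CommRing R] (p q : ℕ) (P Q : R[X]) :
    Matrix (Fin q ⊕ Fin p) (Fin q ⊕ Fin p) R :=
  fun r c => Sum.elim (fun i => (P * X ^ (i : ℕ)).coeff (finSumFinEquiv r : ℕ))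
    (fun j => (Q * X ^ (j : ℕ)).coeff (finSumFinEquiv r : ℕ)) c

lemma sylv_mulVec {R : Type*} [CommRing R] (p q : ℕ) (P Q : R[X])
    (v : Fin q ⊕ Fin p → R) (r : Fin q ⊕ Fin p) :
    (sylv p q P Q).mulVec v r =
      (vecPoly q (v ∘ Sum.inl) * P + vecPoly p (v ∘ Sum.inr) * Q).coeff
        (finSumFinEquiv r : ℕ) := by
  rw [Matrix.mulVec, dotProduct, Fintype.sum_sum_type]
  rw [Polynomial.coeff_add, vecPoly, vecPoly, Finset.sum_mul, Finset.sum_mul,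
    Polynomial.finset_sum_coeff, Polynomial.finset_sum_coeff]
  congr 1 <;>
  · apply Finset.sum_congr rfl
    intro i _
    rw [mul_right_comm, mul_assoc, Polynomial.coeff_C_mul, sylv]
    simp [mul_comm]

lemma sylv_identity {R : Type*} [CommRing R] (p q : ℕ) (hp : 1 ≤ p) (hq : 1 ≤ q)
    (P Q : R[X]) (hP : P.natDegree ≤ p) (hQ : Q.natDegree ≤ q)
    (x : Fin q ⊕ Fin p → R)
    (hx : (sylv p q P Q).mulVec x =
      (sylv p q P Q).det •
        (Pi.single (finSumFinEquiv.symm (⟨0, by omega⟩ : Fin (q + p))) 1 :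
          Fin q ⊕ Fin p → R)) :
    vecPoly q (x ∘ Sum.inl) * P + vecPoly p (x ∘ Sum.inr) * Q = C (sylv p q P Q).det := by
  ext t
  by_cases ht : t < q + p
  · set r : Fin q ⊕ Fin p := finSumFinEquiv.symm ⟨t, ht⟩ with hr
    have h1 := sylv_mulVec p q P Q x r
    have h2 : (finSumFinEquiv r : ℕ) = t := by rw [hr, Equiv.apply_symm_apply]
    rw [h2] at h1
    rw [← h1, show (sylv p q P Q).mulVec x r = _ from congrFun hx r, Polynomial.coeff_C]
    by_cases ht0 : t = 0
    · subst ht0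
      have : r = finSumFinEquiv.symm ⟨0, by omega⟩ := rfl
      rw [this]
      simp
    · rw [if_neg ht0, Pi.smul_apply, Pi.single_apply, if_neg, smul_zero]
      intro h
      apply ht0
      have := congrArg (fun z => (finSumFinEquiv z : ℕ)) h
      simpa [hr] using this
  · push_neg at ht
    rw [Polynomial.coeff_C, if_neg (by omega)]
    have hA := vecPoly_natDegree_le q (x ∘ Sum.inl)
    have hB := vecPoly_natDegree_le p (x ∘ Sum.inr)
    have h3 : (vecPoly q (x ∘ Sum.inl) * P).natDegree < q + p :=
      lt_of_le_of_lt (Polynomial.natDegree_mul_le.trans (add_le_add hA hP)) (by omega)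
    have h4 : (vecPoly p (x ∘ Sum.inr) * Q).natDegree < q + p :=
      lt_of_le_of_lt (Polynomial.natDegree_mul_le.trans (add_le_add hB hQ)) (by omega)
    rw [Polynomial.coeff_add,
      Polynomial.coeff_eq_zero_of_natDegree_lt (lt_of_lt_of_le h3 ht),
      Polynomial.coeff_eq_zero_of_natDegree_lt (lt_of_lt_of_le h4 ht), add_zero]

lemma coeff_castQ (P : Polynomial ℤ) (i k : ℕ) :
    (((P * X ^ i).coeff k : ℤ) : ℚ) = (P.map (Int.castRingHom ℚ) * X ^ i).coeff k := by
  rw [show P.map (Int.castRingHom ℚ) * X ^ i = (P * X ^ i).map (Int.castRingHom ℚ) from by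
    rw [Polynomial.map_mul, Polynomial.map_pow, Polynomial.map_X], Polynomial.coeff_map]
  rfl

set_option synthInstance.maxHeartbeats 1000000 in
lemma sylv_det_ne_zero (P Q : Polynomial ℤ) (hP1 : 1 ≤ P.natDegree) (hQ1 : 1 ≤ Q.natDegree)
    (hcop : CoprimePoly P Q) :
    (sylv P.natDegree Q.natDegree P Q).det ≠ 0 := by
  set p := P.natDegree
  set q := Q.natDegree
  intro hdet
  have hP0 : P ≠ 0 := fun h => by simp [p, h] at hP1
  have hdetQ : ((sylv p q P Q).map (Int.cast : ℤ → ℚ)).det = 0 := by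
    have := RingHom.map_det (Int.castRingHom ℚ) (sylv p q P Q)
    rw [hdet] at this
    simpa [Matrix.map] using this.symm
  have hmapQ : (sylv p q P Q).map (Int.cast : ℤ → ℚ) =
      sylv p q (P.map (Int.castRingHom ℚ)) (Q.map (Int.castRingHom ℚ)) := by
    ext r c
    cases c <;>
    · simp only [sylv, Matrix.map_apply, Sum.elim_inl, Sum.elim_inr]
      exact coeff_castQ _ _ _
  obtain ⟨v, hv0, hv⟩ := Matrix.exists_mulVec_eq_zero_iff.mpr hdetQ
  rw [hmapQ] at hv
  set Pq := P.map (Int.castRingHom ℚ)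
  set Qq := Q.map (Int.castRingHom ℚ)
  set Av := vecPoly q (v ∘ Sum.inl)
  set Bv := vecPoly p (v ∘ Sum.inr)
  have hrel : Av * Pq + Bv * Qq = 0 := by
    ext t
    by_cases ht : t < q + p
    · have h1 := sylv_mulVec p q Pq Qq v (finSumFinEquiv.symm ⟨t, ht⟩)
      rw [Equiv.apply_symm_apply] at h1
      rw [Polynomial.coeff_zero, ← h1, hv]
      rfl
    · push_neg at ht
      rw [Polynomial.coeff_zero]
      apply Polynomial.coeff_eq_zero_of_natDegree_lt
      have hA := vecPoly_natDegree_le q (v ∘ Sum.inl)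
      have hB := vecPoly_natDegree_le p (v ∘ Sum.inr)
      have hPd : Pq.natDegree ≤ p := Polynomial.natDegree_map_le
      have hQd : Qq.natDegree ≤ q := Polynomial.natDegree_map_le
      have h3 : (Av * Pq).natDegree < q + p :=
        lt_of_le_of_lt (Polynomial.natDegree_mul_le.trans (add_le_add hA hPd)) (by omega)
      have h4 : (Bv * Qq).natDegree < q + p :=
        lt_of_le_of_lt (Polynomial.natDegree_mul_le.trans (add_le_add hB hQd)) (by omega)
      exact lt_of_lt_of_le (lt_of_le_of_lt (Polynomial.natDegree_add_le _ _)
        (max_lt h3 h4)) ht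
  obtain ⟨b, hb⟩ := IsLocalization.exist_integer_multiples (nonZeroDivisors ℤ)
    Finset.univ v
  choose w hw using fun i => hb i (Finset.mem_univ i)
  have hwv : ∀ i, ((w i : ℚ)) = (b : ℤ) * v i := by
    intro i
    have := hw i
    simpa [Algebra.smul_def] using this
  set Aw := vecPoly q (w ∘ Sum.inl) with hAw
  set Bw := vecPoly p (w ∘ Sum.inr) with hBw
  have hrelZ : Aw * P + Bw * Q = 0 := by
    apply Polynomial.map_injective (Int.castRingHom ℚ) (fun a b h => Int.cast_injective h)
    rw [Polynomial.map_add, Polynomial.map_mul, Polynomial.map_mul, Polynomial.map_zero]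
    have hAm : Aw.map (Int.castRingHom ℚ) = C ((b : ℤ) : ℚ) * Av := by
      rw [hAw, vecPoly_map]
      rw [show (fun i => (Int.castRingHom ℚ) ((w ∘ Sum.inl) i)) =
        (fun i => ((b : ℤ) : ℚ) * (v ∘ Sum.inl) i) from funext fun i => by
          simpa using hwv (Sum.inl i)]
      exact vecPoly_smul _ _ _
    have hBm : Bw.map (Int.castRingHom ℚ) = C ((b : ℤ) : ℚ) * Bv := by
      rw [hBw, vecPoly_map]
      rw [show (fun i => (Int.castRingHom ℚ) ((w ∘ Sum.inr) i)) =
        (fun i => ((b : ℤ) : ℚ) * (v ∘ Sum.inr) i) from funext fun i => by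
          simpa using hwv (Sum.inr i)]
      exact vecPoly_smul _ _ _
    rw [hAm, hBm, mul_assoc, mul_assoc, ← mul_add, hrel, mul_zero]
  obtain ⟨i₀, hi₀⟩ := Function.ne_iff.mp hv0
  have hb0 : ((b : ℤ) : ℚ) ≠ 0 := by
    exact_mod_cast nonZeroDivisors.coe_ne_zero b
  have hwi₀ : w i₀ ≠ 0 := by
    intro h
    apply hi₀
    have h2 := hwv i₀
    rw [h] at h2
    simpa [hb0] using ((mul_eq_zero.mp h2.symm).resolve_left hb0)
  have hrp : IsRelPrime P.primPart Q := by
    intro d hd1 hd2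
    have hdeg := hcop d (hd1.trans (Polynomial.primPart_dvd P)) hd2
    have hdC := Polynomial.eq_C_of_natDegree_eq_zero hdeg
    rw [hdC] at hd1 ⊢
    exact Polynomial.isUnit_C.mpr (Polynomial.isPrimitive_primPart P _ hd1)
  have hdvdBQ : P.primPart ∣ Bw * Q := by
    refine dvd_trans (Polynomial.primPart_dvd P) ⟨-Aw, ?_⟩
    linear_combination hrelZ
  have hBwz : Bw = 0 := by
    by_contra hBne
    have h1 := Polynomial.natDegree_le_of_dvd (hrp.dvd_of_dvd_mul_right hdvdBQ) hBne
    rw [Polynomial.natDegree_primPart] at h1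
    have h2 : Bw.natDegree ≤ p - 1 := vecPoly_natDegree_le p (w ∘ Sum.inr)
    omega
  have hAwP : Aw * P = 0 := by
    have h3 := hrelZ
    rw [hBwz, zero_mul, add_zero] at h3
    exact h3
  have hAwz : Aw = 0 := (mul_eq_zero.mp hAwP).resolve_right hP0
  cases i₀ with
  | inl i =>
    apply hwi₀
    have h4 : Aw.coeff (i : ℕ) = (w ∘ Sum.inl) i := vecPoly_coeff q (w ∘ Sum.inl) i
    rw [hAwz, Polynomial.coeff_zero] at h4
    exact h4.symm
  | inr j =>
    apply hwi₀
    have h4 : Bw.coeff (j : ℕ) = (w ∘ Sum.inr) j := vecPoly_coeff p (w ∘ Sum.inr) j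
    rw [hBwz, Polynomial.coeff_zero] at h4
    exact h4.symm

lemma adjugate_natAbs_le {ι : Type*} [Fintype ι] [DecidableEq ι]
    (M : Matrix ι ι ℤ) (f : ι → ℕ) (h : ∀ r c, (M r c).natAbs ≤ f c) (c r₀ : ι) :
    (M.adjugate c r₀).natAbs ≤
      (Fintype.card ι).factorial * ∏ i ∈ Finset.univ.erase c, f i := by
  rw [Matrix.adjugate_apply, Matrix.det_apply]
  set M' := M.updateRow r₀ (Pi.single c 1) with hM'
  calc (∑ σ : Equiv.Perm ι, Equiv.Perm.sign σ • ∏ i, M' (σ i) i).natAbs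
      ≤ ∑ σ : Equiv.Perm ι, (Equiv.Perm.sign σ • ∏ i, M' (σ i) i).natAbs := by
        apply nat_abs_sum_le
    _ ≤ ∑ σ : Equiv.Perm ι, ∏ i ∈ Finset.univ.erase c, f i := by
        apply Finset.sum_le_sum
        intro σ _
        have habs : (Equiv.Perm.sign σ • ∏ i, M' (σ i) i).natAbs =
            (∏ i, M' (σ i) i).natAbs := by
          rw [Units.smul_def, zsmul_eq_mul, Int.natAbs_mul]
          rcases Int.units_eq_one_or (Equiv.Perm.sign σ) with h1 | h1 <;> simp [h1]
        rw [habs]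
        by_cases hσ : σ c = r₀
        · rw [show (∏ i, M' (σ i) i).natAbs = ∏ i, (M' (σ i) i).natAbs from
            map_prod Int.natAbsHom _ _]
          rw [← Finset.mul_prod_erase Finset.univ _ (Finset.mem_univ c)]
          have hc1 : (M' (σ c) c).natAbs = 1 := by
            rw [hσ, hM', Matrix.updateRow_self, Pi.single_eq_same]
            rfl
          rw [hc1, one_mul]
          apply Finset.prod_le_prod'
          intro i hi
          have hne : σ i ≠ r₀ := by
            intro he
            exact (Finset.mem_erase.mp hi).1 (σ.injective (by rw [he, hσ]))
          rw [hM', Matrix.updateRow_apply, if_neg hne]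
          exact h _ _
        · have hz0 : M' (σ (σ.symm r₀)) (σ.symm r₀) = 0 := by
            rw [Equiv.apply_symm_apply, hM', Matrix.updateRow_self, Pi.single_apply,
              if_neg]
            intro he
            exact hσ (by rw [← he, Equiv.apply_symm_apply])
          have hz : (∏ i, M' (σ i) i) = 0 :=
            Finset.prod_eq_zero (Finset.mem_univ (σ.symm r₀)) hz0
          rw [hz]
          simp
    _ = (Fintype.card ι).factorial * ∏ i ∈ Finset.univ.erase c, f i := by
        rw [Finset.sum_const, Finset.card_univ, Fintype.card_perm, smul_eq_mul]

lemma prod_erase_inl (p q : ℕ) (hq : 1 ≤ q) (a b : ℕ) (ha : 1 ≤ a) (i : Fin q) :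
    (∏ j ∈ Finset.univ.erase (Sum.inl i : Fin q ⊕ Fin p),
        Sum.elim (fun _ : Fin q => a) (fun _ : Fin p => b) j) = a ^ (q - 1) * b ^ p := by
  apply Nat.eq_of_mul_eq_mul_left (show 0 < a by omega)
  have h1 := Finset.mul_prod_erase Finset.univ
    (Sum.elim (fun _ : Fin q => a) (fun _ : Fin p => b))
    (Finset.mem_univ (Sum.inl i : Fin q ⊕ Fin p))
  rw [show (Sum.elim (fun _ : Fin q => a) (fun _ : Fin p => b) (Sum.inl i)) = a from rfl] at h1
  rw [h1, Fintype.prod_sum_type]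
  simp
  have h2 : a ^ q = a * a ^ (q - 1) := by
    conv_lhs => rw [show q = (q - 1) + 1 from by omega]
    ring
  rw [h2]
  ring

lemma prod_erase_inr (p q : ℕ) (hp : 1 ≤ p) (a b : ℕ) (hb : 1 ≤ b) (j : Fin p) :
    (∏ i ∈ Finset.univ.erase (Sum.inr j : Fin q ⊕ Fin p),
        Sum.elim (fun _ : Fin q => a) (fun _ : Fin p => b) i) = a ^ q * b ^ (p - 1) := by
  apply Nat.eq_of_mul_eq_mul_left (show 0 < b by omega)
  have h1 := Finset.mul_prod_erase Finset.univ
    (Sum.elim (fun _ : Fin q => a) (fun _ : Fin p => b))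
    (Finset.mem_univ (Sum.inr j : Fin q ⊕ Fin p))
  rw [show (Sum.elim (fun _ : Fin q => a) (fun _ : Fin p => b) (Sum.inr j)) = b from rfl] at h1
  rw [h1, Fintype.prod_sum_type]
  simp
  have h2 : b ^ p = b * b ^ (p - 1) := by
    conv_lhs => rw [show p = (p - 1) + 1 from by omega]
    ring
  rw [h2]
  ring

lemma aeval_vecPoly_abs_le (N : ℕ) (f : Fin N → ℤ) (K : ℝ) (hK : ∀ i, |(f i : ℝ)| ≤ K)
    (ξ : ℝ) (E : ℕ) (hNE : N ≤ E + 1) :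
    |Polynomial.aeval ξ (vecPoly N f)| ≤ N * K * (max 1 |ξ|) ^ E := by
  rw [vecPoly_aeval]
  calc |∑ i : Fin N, (f i : ℝ) * ξ ^ (i : ℕ)|
      ≤ ∑ i : Fin N, |(f i : ℝ) * ξ ^ (i : ℕ)| := Finset.abs_sum_le_sum_abs _ _
    _ ≤ ∑ _i : Fin N, K * (max 1 |ξ|) ^ E := by
        apply Finset.sum_le_sum
        intro i _
        rw [abs_mul, abs_pow]
        apply mul_le_mul (hK i) _ (by positivity) ((abs_nonneg _).trans (hK i))
        calc |ξ| ^ (i : ℕ) ≤ (max 1 |ξ|) ^ (i : ℕ) := by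
              apply pow_le_pow_left₀ (abs_nonneg ξ) (le_max_right _ _)
          _ ≤ (max 1 |ξ|) ^ E := by
              apply pow_le_pow_right₀ (le_max_left _ _)
              omega
    _ = N * K * (max 1 |ξ|) ^ E := by
        rw [Finset.sum_const, Finset.card_univ, Fintype.card_fin, nsmul_eq_mul]
        ring
set_option maxHeartbeats 1000000 in
theorem stmt0 (m n : ℕ) (ξ : ℝ) :
    ∃ c : ℝ, 0 < c ∧ ∀ P Q : Polynomial ℤ,
      P.natDegree ≤ m → Q.natDegree ≤ n → CoprimePoly P Q →
      ξ * Polynomial.aeval ξ P * Polynomial.aeval ξ Q ≠ 0 →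
      c * (polyHeight P) ^ (-((n : ℝ) - 1)) * (polyHeight Q) ^ (-(m : ℝ)) ≤
          |Polynomial.aeval ξ P| ∨
        c * (polyHeight P) ^ (-(n : ℝ)) * (polyHeight Q) ^ (-((m : ℝ) - 1)) ≤
          |Polynomial.aeval ξ Q| := by
  classical
  set T : ℝ := (max 1 |ξ|) ^ (m + n) with hTdef
  set C₀ : ℝ := ((m + n).factorial : ℝ) * ((m + n + 1 : ℕ) : ℝ) * T with hC₀def
  have hT1 : (1 : ℝ) ≤ T := one_le_pow₀ (le_max_left 1 |ξ|)
  have hfact1 : (1 : ℝ) ≤ ((m + n).factorial : ℝ) := by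
    exact_mod_cast Nat.one_le_iff_ne_zero.mpr (Nat.factorial_ne_zero _)
  have hmn1 : (1 : ℝ) ≤ ((m + n + 1 : ℕ) : ℝ) := by exact_mod_cast Nat.le_add_left 1 (m + n)
  have hC₀1 : (1 : ℝ) ≤ C₀ := by
    rw [hC₀def]
    have h1 : (1:ℝ) * 1 ≤ ((m + n).factorial : ℝ) * ((m + n + 1 : ℕ) : ℝ) :=
      mul_le_mul hfact1 hmn1 zero_le_one (by linarith)
    nlinarith
  have hC₀0 : (0 : ℝ) < C₀ := lt_of_lt_of_le one_pos hC₀1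
  set c : ℝ := min 1 (1 / (2 * C₀)) with hcdef
  have hc0 : 0 < c := lt_min one_pos (by positivity)
  have hc1 : c ≤ 1 := min_le_left _ _
  have hcC : c ≤ 1 / (2 * C₀) := min_le_right _ _
  refine ⟨c, hc0, ?_⟩
  intro P Q hPm hQn hcop hξ0
  have hPξ : Polynomial.aeval ξ P ≠ 0 := by intro h; apply hξ0; rw [h]; ring
  have hQξ : Polynomial.aeval ξ Q ≠ 0 := by intro h; apply hξ0; rw [h]; ring
  have hP0 : P ≠ 0 := by rintro rfl; simp at hPξ
  have hQ0 : Q ≠ 0 := by rintro rfl; simp at hQξ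
  have hHP1 : (1 : ℝ) ≤ polyHeight P := by
    rw [polyHeight_eq]; exact_mod_cast one_le_heightNat hP0
  have hHQ1 : (1 : ℝ) ≤ polyHeight Q := by
    rw [polyHeight_eq]; exact_mod_cast one_le_heightNat hQ0
  have hHP0 : (0 : ℝ) < polyHeight P := lt_of_lt_of_le one_pos hHP1
  have hHQ0 : (0 : ℝ) < polyHeight Q := lt_of_lt_of_le one_pos hHQ1
  by_cases hq1 : Q.natDegree = 0
  · right
    have hQC := Polynomial.eq_C_of_natDegree_eq_zero hq1
    have hev : |Polynomial.aeval ξ Q| = polyHeight Q := by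
      rw [polyHeight_eq, heightNat]
      conv_lhs => rw [hQC]
      rw [Polynomial.aeval_C]
      have ha : Q.coeff 0 ≠ 0 := fun h => hQ0 (by rw [hQC, h, map_zero])
      rw [show Q.support.sup (fun i => (Q.coeff i).natAbs) = (Q.coeff 0).natAbs from by
        conv_lhs => rw [hQC]
        rw [Polynomial.support_C ha, Finset.sup_singleton, Polynomial.coeff_C_zero]]
      rw [Nat.cast_natAbs]
      norm_num
    rw [hev]
    have e1 : polyHeight P ^ (-(n : ℝ)) ≤ 1 :=
      Real.rpow_le_one_of_one_le_of_nonpos hHP1 (by simp)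
    have e1p : (0 : ℝ) < polyHeight P ^ (-(n : ℝ)) := Real.rpow_pos_of_pos hHP0 _
    have e2 : polyHeight Q ^ (-((m : ℝ) - 1)) ≤ polyHeight Q := by
      calc polyHeight Q ^ (-((m : ℝ) - 1)) ≤ polyHeight Q ^ (1 : ℝ) :=
            Real.rpow_le_rpow_of_exponent_le hHQ1
              (by have : (0:ℝ) ≤ (m:ℝ) := Nat.cast_nonneg m; linarith)
        _ = polyHeight Q := Real.rpow_one _
    have e2p : (0 : ℝ) < polyHeight Q ^ (-((m : ℝ) - 1)) := Real.rpow_pos_of_pos hHQ0 _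
    calc c * polyHeight P ^ (-(n : ℝ)) * polyHeight Q ^ (-((m : ℝ) - 1))
        ≤ 1 * 1 * polyHeight Q := by
          apply mul_le_mul (mul_le_mul hc1 e1 e1p.le zero_le_one) e2 e2p.le (by norm_num)
      _ = polyHeight Q := by ring
  by_cases hp1 : P.natDegree = 0
  · left
    have hPC := Polynomial.eq_C_of_natDegree_eq_zero hp1
    have hev : |Polynomial.aeval ξ P| = polyHeight P := by
      rw [polyHeight_eq, heightNat]
      conv_lhs => rw [hPC]
      rw [Polynomial.aeval_C]
      have ha : P.coeff 0 ≠ 0 := fun h => hP0 (by rw [hPC, h, map_zero])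
      rw [show P.support.sup (fun i => (P.coeff i).natAbs) = (P.coeff 0).natAbs from by
        conv_lhs => rw [hPC]
        rw [Polynomial.support_C ha, Finset.sup_singleton, Polynomial.coeff_C_zero]]
      rw [Nat.cast_natAbs]
      norm_num
    rw [hev]
    have e1 : polyHeight P ^ (-((n : ℝ) - 1)) ≤ polyHeight P := by
      calc polyHeight P ^ (-((n : ℝ) - 1)) ≤ polyHeight P ^ (1 : ℝ) :=
            Real.rpow_le_rpow_of_exponent_le hHP1
              (by have : (0:ℝ) ≤ (n:ℝ) := Nat.cast_nonneg n; linarith)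
        _ = polyHeight P := Real.rpow_one _
    have e1p : (0 : ℝ) < polyHeight P ^ (-((n : ℝ) - 1)) := Real.rpow_pos_of_pos hHP0 _
    have e2 : polyHeight Q ^ (-(m : ℝ)) ≤ 1 :=
      Real.rpow_le_one_of_one_le_of_nonpos hHQ1 (by simp)
    have e2p : (0 : ℝ) < polyHeight Q ^ (-(m : ℝ)) := Real.rpow_pos_of_pos hHQ0 _
    calc c * polyHeight P ^ (-((n : ℝ) - 1)) * polyHeight Q ^ (-(m : ℝ))
        ≤ 1 * polyHeight P * 1 := by
          apply mul_le_mul (mul_le_mul hc1 e1 e1p.le zero_le_one) e2 e2p.le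
            (by positivity)
      _ = polyHeight P := by ring
  -- main case
  have hp : 1 ≤ P.natDegree := by omega
  have hq : 1 ≤ Q.natDegree := by omega
  set p := P.natDegree with hpdef
  set q := Q.natDegree with hqdef
  have hd : (sylv p q P Q).det ≠ 0 := sylv_det_ne_zero P Q hp hq hcop
  set r₀ : Fin q ⊕ Fin p := finSumFinEquiv.symm ⟨0, by omega⟩ with hr₀
  set x : Fin q ⊕ Fin p → ℤ := (sylv p q P Q).adjugate.mulVec (Pi.single r₀ 1) with hxdef
  have hx : (sylv p q P Q).mulVec x =
      (sylv p q P Q).det • (Pi.single r₀ 1 : Fin q ⊕ Fin p → ℤ) := by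
    rw [hxdef, Matrix.mulVec_mulVec, Matrix.mul_adjugate, Matrix.smul_mulVec,
      Matrix.one_mulVec]
  have hid := sylv_identity p q hp hq P Q le_rfl le_rfl x hx
  have hev : (Polynomial.aeval ξ (vecPoly q (x ∘ Sum.inl))) * (Polynomial.aeval ξ P)
      + (Polynomial.aeval ξ (vecPoly p (x ∘ Sum.inr))) * (Polynomial.aeval ξ Q)
      = (((sylv p q P Q).det : ℤ) : ℝ) := by
    have h5 := congrArg (Polynomial.aeval ξ) hid
    simpa using h5
  have h1le : (1 : ℝ) ≤ |(((sylv p q P Q).det : ℤ) : ℝ)| := by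
    exact_mod_cast Int.one_le_abs (by exact hd)
  -- column bounds
  set HP := heightNat P with hHPdef
  set HQ := heightNat Q with hHQdef
  set colf : Fin q ⊕ Fin p → ℕ :=
    Sum.elim (fun _ : Fin q => HP) (fun _ : Fin p => HQ) with hcolf
  have hcol : ∀ r c', (((sylv p q P Q) r c').natAbs ≤ colf c') := by
    intro r c'
    cases c' with
    | inl i =>
      show ((P * X ^ (i : ℕ)).coeff _).natAbs ≤ HP
      rw [Polynomial.coeff_mul_X_pow']
      split_ifs
      · exact coeff_natAbs_le P _
      · simp
    | inr j =>
      show ((Q * X ^ (j : ℕ)).coeff _).natAbs ≤ HQ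
      rw [Polynomial.coeff_mul_X_pow']
      split_ifs
      · exact coeff_natAbs_le Q _
      · simp
  have hcard : Fintype.card (Fin q ⊕ Fin p) = q + p := by simp
  have hxA : ∀ i : Fin q,
      (x (Sum.inl i)).natAbs ≤ (q + p).factorial * (HP ^ (q - 1) * HQ ^ p) := by
    intro i
    have h2 : x (Sum.inl i) = (sylv p q P Q).adjugate (Sum.inl i) r₀ * 1 := by
      rw [hxdef, Matrix.mulVec_single]
      rfl
    rw [h2, mul_one]
    have h3 := adjugate_natAbs_le (sylv p q P Q) colf hcol (Sum.inl i) r₀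
    rwa [hcard, prod_erase_inl p q hq HP HQ (one_le_heightNat hP0) i] at h3
  have hxB : ∀ j : Fin p,
      (x (Sum.inr j)).natAbs ≤ (q + p).factorial * (HP ^ q * HQ ^ (p - 1)) := by
    intro j
    have h2 : x (Sum.inr j) = (sylv p q P Q).adjugate (Sum.inr j) r₀ * 1 := by
      rw [hxdef, Matrix.mulVec_single]
      rfl
    rw [h2, mul_one]
    have h3 := adjugate_natAbs_le (sylv p q P Q) colf hcol (Sum.inr j) r₀
    rwa [hcard, prod_erase_inr p q hp HP HQ (one_le_heightNat hQ0) j] at h3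
  -- real bounds
  set XA : ℝ := polyHeight P ^ (q - 1) with hXA
  set YA : ℝ := polyHeight Q ^ p with hYA
  set XB : ℝ := polyHeight P ^ q with hXB
  set YB : ℝ := polyHeight Q ^ (p - 1) with hYB
  have hXA1 : (1 : ℝ) ≤ XA := one_le_pow₀ hHP1
  have hYA1 : (1 : ℝ) ≤ YA := one_le_pow₀ hHQ1
  have hXB1 : (1 : ℝ) ≤ XB := one_le_pow₀ hHP1
  have hYB1 : (1 : ℝ) ≤ YB := one_le_pow₀ hHQ1
  set KA : ℝ := (((q + p).factorial : ℝ)) * (XA * YA) with hKA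
  set KB : ℝ := (((q + p).factorial : ℝ)) * (XB * YB) with hKB
  have hKAbd : ∀ i : Fin q, |(x (Sum.inl i) : ℝ)| ≤ KA := by
    intro i
    have h9 := hxA i
    have h10 : (((x (Sum.inl i)).natAbs : ℕ) : ℝ) ≤
        (((q + p).factorial * (HP ^ (q - 1) * HQ ^ p) : ℕ) : ℝ) := by exact_mod_cast h9
    rw [hKA, hXA, hYA, polyHeight_eq, polyHeight_eq]
    push_cast [Nat.cast_natAbs] at h10 ⊢
    linarith
  have hKBbd : ∀ j : Fin p, |(x (Sum.inr j) : ℝ)| ≤ KB := by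
    intro j
    have h9 := hxB j
    have h10 : (((x (Sum.inr j)).natAbs : ℕ) : ℝ) ≤
        (((q + p).factorial * (HP ^ q * HQ ^ (p - 1)) : ℕ) : ℝ) := by exact_mod_cast h9
    rw [hKB, hXB, hYB, polyHeight_eq, polyHeight_eq]
    push_cast [Nat.cast_natAbs] at h10 ⊢
    linarith
  have hA := aeval_vecPoly_abs_le q (x ∘ Sum.inl) KA hKAbd ξ (m + n) (by omega)
  have hB := aeval_vecPoly_abs_le p (x ∘ Sum.inr) KB hKBbd ξ (m + n) (by omega)
  have hKA0 : (0 : ℝ) ≤ KA := le_trans (abs_nonneg _) (hKAbd ⟨0, by omega⟩)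
  have hKB0 : (0 : ℝ) ≤ KB := le_trans (abs_nonneg _) (hKBbd ⟨0, by omega⟩)
  have habs : (1 : ℝ) ≤ ((q : ℝ) * KA * T) * |Polynomial.aeval ξ P|
      + ((p : ℝ) * KB * T) * |Polynomial.aeval ξ Q| := by
    calc (1 : ℝ) ≤ |(((sylv p q P Q).det : ℤ) : ℝ)| := h1le
      _ = |(Polynomial.aeval ξ (vecPoly q (x ∘ Sum.inl))) * (Polynomial.aeval ξ P)
          + (Polynomial.aeval ξ (vecPoly p (x ∘ Sum.inr))) * (Polynomial.aeval ξ Q)| := by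
          rw [hev]
      _ ≤ |Polynomial.aeval ξ (vecPoly q (x ∘ Sum.inl))| * |Polynomial.aeval ξ P|
          + |Polynomial.aeval ξ (vecPoly p (x ∘ Sum.inr))| * |Polynomial.aeval ξ Q| := by
          refine (abs_add_le _ _).trans ?_
          rw [abs_mul, abs_mul]
      _ ≤ _ := by
          apply add_le_add
          · exact mul_le_mul_of_nonneg_right hA (abs_nonneg _)
          · exact mul_le_mul_of_nonneg_right hB (abs_nonneg _)
  have hqn' : (q : ℝ) ≤ (n : ℝ) := Nat.cast_le.mpr hQn
  have hpm' : (p : ℝ) ≤ (m : ℝ) := Nat.cast_le.mpr hPm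
  have hconst : ∀ N : ℕ, N ≤ m + n →
      (N : ℝ) * ((q + p).factorial : ℝ) * T ≤ C₀ := by
    intro N hN
    rw [hC₀def]
    have h6 : (N : ℝ) * ((q + p).factorial : ℝ) ≤
        ((m + n).factorial : ℝ) * ((m + n + 1 : ℕ) : ℝ) := by
      have : N * (q + p).factorial ≤ (m + n).factorial * (m + n + 1) := by
        calc N * (q + p).factorial ≤ (m + n + 1) * (m + n).factorial :=
              Nat.mul_le_mul (by omega) (Nat.factorial_le (by omega))
          _ = (m + n).factorial * (m + n + 1) := by ring
      exact_mod_cast this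
    nlinarith [hT1, mul_le_mul_of_nonneg_right h6 (le_trans zero_le_one hT1)]
  by_cases hcase : (1 : ℝ) / 2 ≤ ((q : ℝ) * KA * T) * |Polynomial.aeval ξ P|
  · left
    have hstep : (1 : ℝ) / 2 ≤ C₀ * XA * YA * |Polynomial.aeval ξ P| := by
      refine le_trans hcase (mul_le_mul_of_nonneg_right ?_ (abs_nonneg _))
      have h7 := hconst q (by omega)
      calc (q : ℝ) * KA * T = ((q : ℝ) * ((q + p).factorial : ℝ) * T) * (XA * YA) := by
            rw [hKA]; ring
        _ ≤ C₀ * (XA * YA) :=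
            mul_le_mul_of_nonneg_right h7 (by nlinarith)
        _ = C₀ * XA * YA := by ring
    have hXA0 : (0 : ℝ) < XA := lt_of_lt_of_le one_pos hXA1
    have hYA0 : (0 : ℝ) < YA := lt_of_lt_of_le one_pos hYA1
    have hfin : 1 / (2 * C₀) * XA⁻¹ * YA⁻¹ ≤ |Polynomial.aeval ξ P| := by
      rw [show (1 : ℝ) / (2 * C₀) * XA⁻¹ * YA⁻¹ = 1 / (2 * C₀ * XA * YA) from by
        rw [one_div, one_div, mul_inv, mul_inv]; ring]
      rw [div_le_iff₀ (by positivity)]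
      nlinarith [hstep]
    refine le_trans ?_ hfin
    have hXineq : polyHeight P ^ (-((n : ℝ) - 1)) ≤ XA⁻¹ := by
      have e1 : polyHeight P ^ (-(((q - 1 : ℕ) : ℝ))) = XA⁻¹ := by
        rw [Real.rpow_neg hHP0.le, Real.rpow_natCast]
      rw [← e1]
      apply Real.rpow_le_rpow_of_exponent_le hHP1
      rw [Nat.cast_sub hq]
      push_cast
      linarith
    have hYineq : polyHeight Q ^ (-(m : ℝ)) ≤ YA⁻¹ := by
      have e1 : polyHeight Q ^ (-((p : ℕ) : ℝ)) = YA⁻¹ := by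
        rw [Real.rpow_neg hHQ0.le, Real.rpow_natCast]
      rw [← e1]
      apply Real.rpow_le_rpow_of_exponent_le hHQ1
      push_cast
      linarith
    have hXp : (0 : ℝ) < polyHeight P ^ (-((n : ℝ) - 1)) := Real.rpow_pos_of_pos hHP0 _
    have hYp : (0 : ℝ) < polyHeight Q ^ (-(m : ℝ)) := Real.rpow_pos_of_pos hHQ0 _
    calc c * polyHeight P ^ (-((n : ℝ) - 1)) * polyHeight Q ^ (-(m : ℝ))
        ≤ (1 / (2 * C₀)) * XA⁻¹ * YA⁻¹ := by
          apply mul_le_mul (mul_le_mul hcC hXineq hXp.le (by positivity)) hYineq hYp.le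
            (by positivity)
      _ ≤ _ := le_refl _
  · right
    have hcase' : (1 : ℝ) / 2 ≤ ((p : ℝ) * KB * T) * |Polynomial.aeval ξ Q| := by
      push_neg at hcase
      linarith
    have hstep : (1 : ℝ) / 2 ≤ C₀ * XB * YB * |Polynomial.aeval ξ Q| := by
      refine le_trans hcase' (mul_le_mul_of_nonneg_right ?_ (abs_nonneg _))
      have h7 := hconst p (by omega)
      calc (p : ℝ) * KB * T = ((p : ℝ) * ((q + p).factorial : ℝ) * T) * (XB * YB) := by
            rw [hKB]; ring
        _ ≤ C₀ * (XB * YB) :=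
            mul_le_mul_of_nonneg_right h7 (by nlinarith)
        _ = C₀ * XB * YB := by ring
    have hXB0 : (0 : ℝ) < XB := lt_of_lt_of_le one_pos hXB1
    have hYB0 : (0 : ℝ) < YB := lt_of_lt_of_le one_pos hYB1
    have hfin : 1 / (2 * C₀) * XB⁻¹ * YB⁻¹ ≤ |Polynomial.aeval ξ Q| := by
      rw [show (1 : ℝ) / (2 * C₀) * XB⁻¹ * YB⁻¹ = 1 / (2 * C₀ * XB * YB) from by
        rw [one_div, one_div, mul_inv, mul_inv]; ring]
      rw [div_le_iff₀ (by positivity)]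
      nlinarith [hstep]
    refine le_trans ?_ hfin
    have hXineq : polyHeight P ^ (-(n : ℝ)) ≤ XB⁻¹ := by
      have e1 : polyHeight P ^ (-((q : ℕ) : ℝ)) = XB⁻¹ := by
        rw [Real.rpow_neg hHP0.le, Real.rpow_natCast]
      rw [← e1]
      apply Real.rpow_le_rpow_of_exponent_le hHP1
      push_cast
      linarith
    have hYineq : polyHeight Q ^ (-((m : ℝ) - 1)) ≤ YB⁻¹ := by
      have e1 : polyHeight Q ^ (-(((p - 1 : ℕ) : ℝ))) = YB⁻¹ := by
        rw [Real.rpow_neg hHQ0.le, Real.rpow_natCast]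
      rw [← e1]
      apply Real.rpow_le_rpow_of_exponent_le hHQ1
      rw [Nat.cast_sub hp]
      push_cast
      linarith
    have hXp : (0 : ℝ) < polyHeight P ^ (-(n : ℝ)) := Real.rpow_pos_of_pos hHP0 _
    have hYp : (0 : ℝ) < polyHeight Q ^ (-((m : ℝ) - 1)) := Real.rpow_pos_of_pos hHQ0 _
    calc c * polyHeight P ^ (-(n : ℝ)) * polyHeight Q ^ (-((m : ℝ) - 1))
        ≤ (1 / (2 * C₀)) * XB⁻¹ * YB⁻¹ := by
          apply mul_le_mul (mul_le_mul hcC hXineq hXp.le (by positivity)) hYineq hYp.le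
            (by positivity)
      _ ≤ _ := le_refl _
end

section
/- Let P and Q be coprime polynomials with integer coefficients of degrees at most m and n respectively, and let ξ be a real number with ξ·P(ξ)·Q(ξ) ≠ 0. Then there is a constant c > 0 depending only on m, n, ξ such that max{|P(ξ)|, |Q(ξ)|} ≥ c·H(P)^{-(n-1)}·H(Q)^{-(m-1)}·min{H(P)^{-1}, H(Q)^{-1}}. -/
open Polynomial Filter

lemma polyHeight_nonneg (P : Polynomial ℤ) : 0 ≤ polyHeight P := Nat.cast_nonneg _

lemma abs_coeff_le_polyHeight (P : Polynomial ℤ) (t : ℕ) :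
    |(P.coeff t : ℝ)| ≤ polyHeight P := by
  rcases eq_or_ne (P.coeff t) 0 with h | h
  · simp [h, polyHeight_nonneg]
  · have h1 : |(P.coeff t : ℝ)| = (((P.coeff t).natAbs : ℕ) : ℝ) := by
      rw [Nat.cast_natAbs, Int.cast_abs]
    rw [h1]
    exact Nat.cast_le.mpr (Finset.le_sup (f := fun i => (P.coeff i).natAbs)
      (mem_support_iff.mpr h))

lemma one_le_polyHeight {P : Polynomial ℤ} (hP : P ≠ 0) : 1 ≤ polyHeight P := by
  obtain ⟨t, ht⟩ : ∃ t, P.coeff t ≠ 0 := by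
    by_contra hc
    push_neg at hc
    exact hP (Polynomial.ext fun t => by simp [hc t])
  have h1 : 1 ≤ (P.coeff t).natAbs := Nat.one_le_iff_ne_zero.mpr (Int.natAbs_ne_zero.mpr ht)
  have h2 : (P.coeff t).natAbs ≤ P.support.sup fun i => (P.coeff i).natAbs :=
    Finset.le_sup (f := fun i => (P.coeff i).natAbs) (mem_support_iff.mpr ht)
  exact_mod_cast Nat.cast_le.mpr (h1.trans h2)

lemma polyHeight_C {a : ℤ} (ha : a ≠ 0) : polyHeight (C a) = |(a : ℝ)| := by
  unfold polyHeight
  rw [Polynomial.support_C ha]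
  simp [Nat.cast_natAbs]

lemma det_abs_le {ι : Type*} [Fintype ι] [DecidableEq ι] (N : Matrix ι ι ℤ) (b : ι → ℝ)
    (hb : ∀ c, 0 ≤ b c) (hN : ∀ i c, |(N i c : ℝ)| ≤ b c) :
    |(N.det : ℝ)| ≤ (Nat.factorial (Fintype.card ι)) * ∏ c, b c := by
  have hcast : ((N.det : ℤ) : ℝ) = (N.map (Int.cast : ℤ → ℝ)).det := by
    have h := RingHom.map_det (Int.castRingHom ℝ) N
    rw [RingHom.mapMatrix_apply] at h
    simpa [Int.coe_castRingHom] using h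
  rw [hcast, Matrix.det_apply]
  refine (Finset.abs_sum_le_sum_abs _ _).trans ?_
  have hterm : ∀ σ : Equiv.Perm ι,
      |Equiv.Perm.sign σ • ∏ i, (N.map (Int.cast : ℤ → ℝ)) (σ i) i| ≤ ∏ c, b c := by
    intro σ
    have habs : |Equiv.Perm.sign σ • ∏ i, (N.map (Int.cast : ℤ → ℝ)) (σ i) i|
        = |∏ i, (N.map (Int.cast : ℤ → ℝ)) (σ i) i| := by
      rcases Int.units_eq_one_or (Equiv.Perm.sign σ) with h | h <;>
        simp [h, Units.smul_def, abs_neg]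
    rw [habs, Finset.abs_prod]
    refine Finset.prod_le_prod (fun i _ => abs_nonneg _) (fun i _ => ?_)
    simpa using hN (σ i) i
  calc ∑ σ : Equiv.Perm ι, |Equiv.Perm.sign σ • ∏ i, (N.map (Int.cast : ℤ → ℝ)) (σ i) i|
      ≤ ∑ _σ : Equiv.Perm ι, ∏ c, b c := Finset.sum_le_sum (fun σ _ => hterm σ)
    _ = (Nat.factorial (Fintype.card ι)) * ∏ c, b c := by
        rw [Finset.sum_const, Finset.card_univ, Fintype.card_perm, nsmul_eq_mul]

lemma coeff_sum_fin {t : ℕ} (w : Fin t → ℤ) (i : Fin t) :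
    (∑ j : Fin t, C (w j) * X ^ (j : ℕ)).coeff (i : ℕ) = w i := by
  rw [finset_sum_coeff]
  simp only [coeff_C_mul, coeff_X_pow]
  rw [Finset.sum_eq_single i]
  · simp
  · intro j _ hji
    rw [if_neg (fun h => hji (Fin.ext h.symm)), mul_zero]
  · intro h; exact absurd (Finset.mem_univ i) h

lemma min_inv_eq {a b : ℝ} (ha : 0 < a) (hb : 0 < b) :
    min a⁻¹ b⁻¹ = min a b / (a * b) := by
  rcases le_total a b with h | h
  · rw [min_eq_right (by gcongr), min_eq_left h]
    field_simp
  · rw [min_eq_left (by gcongr), min_eq_right h]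
    field_simp

open Matrix in
lemma key_ineq (ξ : ℝ) (P Q : Polynomial ℤ) (hP : P ≠ 0) (hQ : Q ≠ 0)
    (hco : CoprimePoly P Q) (hk : 1 ≤ Q.natDegree + P.natDegree) :
    min (polyHeight P) (polyHeight Q) ≤
      (((Q.natDegree + P.natDegree) : ℝ) * (Nat.factorial (Q.natDegree + P.natDegree)) *
        (max 1 |ξ|) ^ (Q.natDegree + P.natDegree) *
        polyHeight P ^ Q.natDegree * polyHeight Q ^ P.natDegree) *
      max |Polynomial.aeval ξ P| |Polynomial.aeval ξ Q| := by
  classical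
  set p := P.natDegree with hpdef
  set q := Q.natDegree with hqdef
  set k := q + p with hkdef
  set T := max 1 |ξ| with hTdef
  have hT1 : (1 : ℝ) ≤ T := le_max_left _ _
  have hT0 : (0 : ℝ) < T := lt_of_lt_of_le one_pos hT1
  have hHP1 : 1 ≤ polyHeight P := one_le_polyHeight hP
  have hHQ1 : 1 ≤ polyHeight Q := one_le_polyHeight hQ
  have hHP0 : 0 < polyHeight P := lt_of_lt_of_le one_pos hHP1
  have hHQ0 : 0 < polyHeight Q := lt_of_lt_of_le one_pos hHQ1
  set HP := polyHeight P with hHPdef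
  set HQ := polyHeight Q with hHQdef
  set colPoly : Fin q ⊕ Fin p → Polynomial ℤ :=
    Sum.elim (fun a => P * Polynomial.X ^ (a : ℕ)) (fun b => Q * Polynomial.X ^ (b : ℕ))
    with hcolPoly
  have hcoldeg : ∀ j, (colPoly j).natDegree < k := by
    rintro (a | b)
    · refine lt_of_le_of_lt (Polynomial.natDegree_mul_le.trans ?_) (show p + (a:ℕ) < k by omega)
      simp [Polynomial.natDegree_X_pow, hpdef]
    · refine lt_of_le_of_lt (Polynomial.natDegree_mul_le.trans ?_) (show q + (b:ℕ) < k by omega)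
      simp [Polynomial.natDegree_X_pow, hqdef]
  set e : (Fin q ⊕ Fin p) ≃ Fin k := finSumFinEquiv with hedef
  set M : Matrix (Fin q ⊕ Fin p) (Fin q ⊕ Fin p) ℤ :=
    Matrix.of (fun i j => (colPoly j).coeff (e i)) with hMdef
  have hM_apply : ∀ i j, M i j = (colPoly j).coeff (e i) := fun i j => rfl
  set S : ((Fin q ⊕ Fin p) → ℤ) → Polynomial ℤ :=
    fun v => ∑ j, Polynomial.C (v j) * colPoly j with hSdef
  have hS_coeff : ∀ v r, (S v).coeff (e r) = M.mulVec v r := by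
    intro v r
    rw [hSdef]
    rw [Polynomial.finset_sum_coeff]
    simp only [Polynomial.coeff_C_mul]
    simp only [Matrix.mulVec, dotProduct, hM_apply]
    exact Finset.sum_congr rfl fun j _ => mul_comm _ _
  have hS_deg : ∀ v (i : ℕ), k ≤ i → (S v).coeff i = 0 := by
    intro v i hi
    apply Polynomial.coeff_eq_zero_of_natDegree_lt
    refine lt_of_le_of_lt
      (Polynomial.natDegree_sum_le_of_forall_le _ _ fun j _ =>
        (Polynomial.natDegree_C_mul_le _ _).trans (Nat.le_sub_one_of_lt (hcoldeg j))) ?_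
    omega
  have hdet : M.det ≠ 0 := by
    intro hdet0
    obtain ⟨v, hv0, hv⟩ := Matrix.exists_mulVec_eq_zero_iff.mpr hdet0
    set A : Polynomial ℤ := ∑ a : Fin q, Polynomial.C (v (Sum.inl a)) * Polynomial.X ^ (a : ℕ)
      with hAdef
    set B : Polynomial ℤ := ∑ b : Fin p, Polynomial.C (v (Sum.inr b)) * Polynomial.X ^ (b : ℕ)
      with hBdef
    have hSv : S v = 0 := by
      apply Polynomial.ext
      intro i
      rcases lt_or_ge i k with hik | hik
      · have h1 := hS_coeff v (e.symm ⟨i, hik⟩)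
        rw [Equiv.apply_symm_apply] at h1
        simp only [Polynomial.coeff_zero]
        rw [h1, hv]
        rfl
      · simp [hS_deg v i hik]
    have hsplit : A * P + B * Q = 0 := by
      rw [← hSv, hSdef]
      beta_reduce
      rw [Fintype.sum_sum_type]
      simp only [hcolPoly, Sum.elim_inl, Sum.elim_inr]
      rw [hAdef, hBdef, Finset.sum_mul, Finset.sum_mul]
      congr 1
      · exact Finset.sum_congr rfl fun _ _ => by ring
      · exact Finset.sum_congr rfl fun _ _ => by ring
    have hBzero : B = 0 := by
      rcases Nat.eq_zero_or_pos p with hp0 | hp0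
      · have : IsEmpty (Fin p) := by rw [hp0]; exact Fin.isEmpty'
        rw [hBdef, Finset.univ_eq_empty, Finset.sum_empty]
      · by_contra hB
        have hrel : IsRelPrime P.primPart Q := by
          intro d hd1 hd2
          have h0 : d.natDegree = 0 := hco d (hd1.trans P.primPart_dvd) hd2
          obtain ⟨a, rfl⟩ := Polynomial.natDegree_eq_zero.mp h0
          exact Polynomial.isUnit_C.mpr (P.isPrimitive_primPart a hd1)
        have hdvdBQ : P.primPart ∣ B * Q :=
          P.primPart_dvd.trans ⟨-A, by linear_combination hsplit⟩
        have hdvdB : P.primPart ∣ B := hrel.dvd_of_dvd_mul_right hdvdBQ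
        have hdegB : B.natDegree ≤ p - 1 := by
          refine Polynomial.natDegree_sum_le_of_forall_le _ _ fun b _ => ?_
          refine (Polynomial.natDegree_C_mul_le _ _).trans ?_
          rw [Polynomial.natDegree_X_pow]
          omega
        have h2 := Polynomial.natDegree_le_of_dvd hdvdB hB
        rw [Polynomial.natDegree_primPart] at h2
        omega
    have hAzero : A = 0 := by
      have hAP : A * P = 0 := by
        rw [hBzero, zero_mul, add_zero] at hsplit
        exact hsplit
      rcases mul_eq_zero.mp hAP with h | h
      · exact h
      · exact absurd h hP
    apply hv0
    funext j
    rcases j with a | b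
    · have := coeff_sum_fin (fun a => v (Sum.inl a)) a
      rw [← hAdef, hAzero] at this
      simpa using this.symm
    · have := coeff_sum_fin (fun b => v (Sum.inr b)) b
      rw [← hBdef, hBzero] at this
      simpa using this.symm
  set r0 : Fin q ⊕ Fin p := e.symm ⟨0, by omega⟩ with hr0def
  set v : (Fin q ⊕ Fin p) → ℤ := M.adjugate.mulVec (Pi.single r0 1) with hvdef
  have hMv : M.mulVec v = M.det • Pi.single r0 1 := by
    rw [hvdef, Matrix.mulVec_mulVec, Matrix.mul_adjugate, Matrix.smul_mulVec,
      Matrix.one_mulVec]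
  have hSvC : S v = Polynomial.C M.det := by
    apply Polynomial.ext
    intro i
    rcases lt_or_ge i k with hik | hik
    · have h1 := hS_coeff v (e.symm ⟨i, hik⟩)
      rw [Equiv.apply_symm_apply] at h1
      rw [h1, hMv]
      rcases Nat.eq_zero_or_pos i with h0 | h0
      · subst h0
        have hr : e.symm ⟨0, hik⟩ = r0 := by rw [hr0def]
        rw [hr]
        simp [Polynomial.coeff_C]
      · have hne : e.symm ⟨i, hik⟩ ≠ r0 := by
          rw [hr0def]
          intro hcon
          have h2 := congrArg (fun x => (e x : ℕ)) hcon
          simp at h2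
          omega
        rw [Polynomial.coeff_C, if_neg h0.ne']
        simp [Pi.single_apply, hne]
    · rw [hS_deg v i hik, Polynomial.coeff_C, if_neg (by omega)]
  have hvj_det : ∀ j, v j = (M.updateCol j (Pi.single r0 1)).det := by
    intro j
    have h1 : v j = M.adjugate j r0 := by
      rw [hvdef]
      simp [Matrix.mulVec, dotProduct, Pi.single_apply]
    rw [h1]
    have h2 : M.adjugate j r0 = (Matrix.adjugate Mᵀ) r0 j := by
      rw [← Matrix.adjugate_transpose]
      rfl
    rw [h2, Matrix.adjugate_apply, Matrix.updateRow_transpose, Matrix.det_transpose]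
  set HB : Fin q ⊕ Fin p → ℝ := Sum.elim (fun _ => HP) (fun _ => HQ) with hHBdef
  have hHB1 : ∀ j, 1 ≤ HB j := by
    rintro (a | b)
    · simpa [hHBdef] using hHP1
    · simpa [hHBdef] using hHQ1
  have hHB0 : ∀ j, 0 < HB j := fun j => lt_of_lt_of_le one_pos (hHB1 j)
  have hcard : Fintype.card (Fin q ⊕ Fin p) = k := by
    simp [hkdef]
  have hvbound : ∀ j, |(v j : ℝ)| ≤ (Nat.factorial k) * (HP ^ q * HQ ^ p / HB j) := by
    intro j
    rw [hvj_det j]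
    have hb : ∀ c, 0 ≤ Function.update HB j 1 c := by
      intro c
      rcases eq_or_ne c j with rfl | hcj
      · simp
      · rw [Function.update_of_ne hcj]
        exact (hHB0 c).le
    have hentry : ∀ i c, |((M.updateCol j (Pi.single r0 1)) i c : ℝ)|
        ≤ Function.update HB j 1 c := by
      intro i c
      rcases eq_or_ne c j with rfl | hcj
      · rw [Function.update_self, Matrix.updateCol_apply, if_pos rfl]
        rcases eq_or_ne i r0 with rfl | hir
        · simp
        · simp [Pi.single_apply, hir]
      · rw [Function.update_of_ne hcj, Matrix.updateCol_apply, if_neg hcj, hM_apply]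
        rcases c with a | b
        · simp only [hcolPoly, Sum.elim_inl, hHBdef]
          rw [Polynomial.coeff_mul_X_pow']
          split
          · exact abs_coeff_le_polyHeight P _
          · simpa using polyHeight_nonneg P
        · simp only [hcolPoly, Sum.elim_inr, hHBdef]
          rw [Polynomial.coeff_mul_X_pow']
          split
          · exact abs_coeff_le_polyHeight Q _
          · simpa using polyHeight_nonneg Q
    have hmain := det_abs_le _ _ hb hentry
    rw [hcard] at hmain
    refine hmain.trans (le_of_eq ?_)
    congr 1
    have hprodHB : ∏ c, HB c = HP ^ q * HQ ^ p := by
      rw [Fintype.prod_sum_type]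
      simp [hHBdef, Finset.prod_const, Finset.card_univ]
    rw [Finset.prod_update_of_mem (Finset.mem_univ j), one_mul, eq_div_iff (hHB0 j).ne',
      mul_comm, Finset.sdiff_singleton_eq_erase,
      Finset.mul_prod_erase Finset.univ HB (Finset.mem_univ j)]
    exact hprodHB
  set PQ : Fin q ⊕ Fin p → ℝ :=
    Sum.elim (fun _ => |Polynomial.aeval ξ P|) (fun _ => |Polynomial.aeval ξ Q|) with hPQdef
  have haevalb : ∀ j, |Polynomial.aeval ξ (colPoly j)| ≤ T ^ k * PQ j := by
    have hxi : ∀ a : ℕ, a < k → |ξ| ^ a ≤ T ^ k := by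
      intro a ha
      calc |ξ| ^ a ≤ T ^ a := pow_le_pow_left₀ (abs_nonneg ξ) (le_max_right 1 |ξ|) _
        _ ≤ T ^ k := pow_le_pow_right₀ hT1 (by omega)
    rintro (a | b)
    · simp only [hcolPoly, Sum.elim_inl, hPQdef, _root_.map_mul, map_pow, Polynomial.aeval_X]
      rw [abs_mul, abs_pow, mul_comm]
      exact mul_le_mul_of_nonneg_right (hxi a (by omega)) (abs_nonneg _)
    · simp only [hcolPoly, Sum.elim_inr, hPQdef, _root_.map_mul, map_pow, Polynomial.aeval_X]
      rw [abs_mul, abs_pow, mul_comm]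
      exact mul_le_mul_of_nonneg_right (hxi b (by omega)) (abs_nonneg _)
  have heval : (M.det : ℝ) = ∑ j, (v j : ℝ) * Polynomial.aeval ξ (colPoly j) := by
    have h1 := congrArg (Polynomial.aeval ξ) hSvC
    rw [hSdef] at h1
    beta_reduce at h1
    rw [map_sum] at h1
    simp only [_root_.map_mul, Polynomial.aeval_C, algebraMap_int_eq, eq_intCast,
      map_intCast] at h1
    exact h1.symm
  have hdetabs : (1 : ℝ) ≤ |(M.det : ℝ)| := by exact_mod_cast Int.one_le_abs hdet
  set R := max |Polynomial.aeval ξ P| |Polynomial.aeval ξ Q| with hRdef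
  have hR0 : 0 ≤ R := le_trans (abs_nonneg _) (le_max_left _ _)
  have hmin0 : 0 < min HP HQ := lt_min hHP0 hHQ0
  have hterm : ∀ j, |(v j : ℝ) * Polynomial.aeval ξ (colPoly j)|
      ≤ (Nat.factorial k) * T ^ k * (HP ^ q * HQ ^ p) * (R / min HP HQ) := by
    intro j
    rw [abs_mul]
    have h3 : PQ j / HB j ≤ R / min HP HQ := by
      apply div_le_div₀ hR0 ?_ hmin0 ?_
      · rcases j with a | b
        · exact le_max_left _ _
        · exact le_max_right _ _
      · rcases j with a | b
        · exact min_le_left _ _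
        · exact min_le_right _ _
    calc |(v j : ℝ)| * |Polynomial.aeval ξ (colPoly j)|
        ≤ ((Nat.factorial k) * (HP ^ q * HQ ^ p / HB j)) * (T ^ k * PQ j) :=
          mul_le_mul (hvbound j) (haevalb j) (abs_nonneg _)
            (mul_nonneg (by positivity) (div_nonneg (by positivity) (hHB0 j).le))
      _ = (Nat.factorial k) * T ^ k * (HP ^ q * HQ ^ p) * (PQ j / HB j) := by ring
      _ ≤ (Nat.factorial k) * T ^ k * (HP ^ q * HQ ^ p) * (R / min HP HQ) := by
          refine mul_le_mul_of_nonneg_left h3 (by positivity)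
  have hchain : (1 : ℝ) ≤ ((k : ℝ) * (Nat.factorial k) * T ^ k * HP ^ q * HQ ^ p)
      * (R / min HP HQ) := by
    refine hdetabs.trans ?_
    rw [heval]
    refine (Finset.abs_sum_le_sum_abs _ _).trans ?_
    calc ∑ j, |(v j : ℝ) * Polynomial.aeval ξ (colPoly j)|
        ≤ ∑ _j : Fin q ⊕ Fin p,
            (Nat.factorial k) * T ^ k * (HP ^ q * HQ ^ p) * (R / min HP HQ) :=
          Finset.sum_le_sum fun j _ => hterm j
      _ = ((k : ℝ) * (Nat.factorial k) * T ^ k * HP ^ q * HQ ^ p) * (R / min HP HQ) := by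
          rw [Finset.sum_const, Finset.card_univ, hcard, nsmul_eq_mul]
          ring
  have hD0 : (0 : ℝ) < (k : ℝ) * (Nat.factorial k) * T ^ k * HP ^ q * HQ ^ p := by
    have : (0:ℝ) < (k : ℝ) := by exact_mod_cast hk
    positivity
  rw [mul_div_assoc'] at hchain
  have hfinal := (one_le_div hmin0).mp hchain
  have hqp : ((q : ℝ) + (p : ℝ)) = (k : ℝ) := by
    rw [hkdef]
    push_cast
    ring
  rw [show ((q : ℝ) + (p : ℝ)) = (k : ℝ) from hqp]
  exact hfinal

theorem stmt1 (m n : ℕ) (ξ : ℝ) :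
    ∃ c : ℝ, 0 < c ∧ ∀ P Q : Polynomial ℤ,
      P.natDegree ≤ m → Q.natDegree ≤ n → CoprimePoly P Q →
      ξ * Polynomial.aeval ξ P * Polynomial.aeval ξ Q ≠ 0 →
      c * (polyHeight P) ^ (-((n : ℝ) - 1)) * (polyHeight Q) ^ (-((m : ℝ) - 1)) *
          min (polyHeight P)⁻¹ (polyHeight Q)⁻¹ ≤
        max |Polynomial.aeval ξ P| |Polynomial.aeval ξ Q| := by
  have hT1 : (1 : ℝ) ≤ max 1 |ξ| := le_max_left _ _
  have hT0 : (0 : ℝ) < max 1 |ξ| := lt_of_lt_of_le one_pos hT1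
  have hE1 : (1 : ℝ) ≤ (((m + n + 1) * Nat.factorial (m + n) : ℕ) : ℝ) *
      (max 1 |ξ|) ^ (m + n) := by
    have h1 : (1 : ℝ) ≤ (((m + n + 1) * Nat.factorial (m + n) : ℕ) : ℝ) := by
      have : 1 ≤ (m + n + 1) * Nat.factorial (m + n) :=
        Nat.one_le_iff_ne_zero.mpr (Nat.mul_ne_zero (by omega) (Nat.factorial_pos _).ne')
      exact_mod_cast this
    have h2 : (1 : ℝ) ≤ (max 1 |ξ|) ^ (m + n) := one_le_pow₀ hT1
    nlinarith
  have hE0 : (0 : ℝ) < (((m + n + 1) * Nat.factorial (m + n) : ℕ) : ℝ) *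
      (max 1 |ξ|) ^ (m + n) := lt_of_lt_of_le one_pos hE1
  refine ⟨((((m + n + 1) * Nat.factorial (m + n) : ℕ) : ℝ) * (max 1 |ξ|) ^ (m + n))⁻¹,
    inv_pos.mpr hE0, ?_⟩
  intro P Q hPm hQn hco hξ
  have hξP : Polynomial.aeval ξ P ≠ 0 := by
    intro h; apply hξ; rw [h]; ring
  have hξQ : Polynomial.aeval ξ Q ≠ 0 := by
    intro h; apply hξ; rw [h]; ring
  have hP : P ≠ 0 := by rintro rfl; simp at hξP
  have hQ : Q ≠ 0 := by rintro rfl; simp at hξQ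
  have hHP1 : 1 ≤ polyHeight P := one_le_polyHeight hP
  have hHQ1 : 1 ≤ polyHeight Q := one_le_polyHeight hQ
  have hHP0 : 0 < polyHeight P := lt_of_lt_of_le one_pos hHP1
  have hHQ0 : 0 < polyHeight Q := lt_of_lt_of_le one_pos hHQ1
  have hc1 : ((((m + n + 1) * Nat.factorial (m + n) : ℕ) : ℝ) *
      (max 1 |ξ|) ^ (m + n))⁻¹ ≤ 1 := by
    exact inv_le_one_of_one_le₀ hE1
  have hc0 : (0 : ℝ) ≤ ((((m + n + 1) * Nat.factorial (m + n) : ℕ) : ℝ) *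
      (max 1 |ξ|) ^ (m + n))⁻¹ := inv_nonneg.mpr hE0.le
  have hmin_nonneg : 0 ≤ min (polyHeight P) (polyHeight Q) / (polyHeight P * polyHeight Q) :=
    div_nonneg (le_min hHP0.le hHQ0.le) (mul_pos hHP0 hHQ0).le
  rw [min_inv_eq hHP0 hHQ0]
  have hq_le : (Q.natDegree : ℝ) ≤ (n : ℝ) := by exact_mod_cast hQn
  have hp_le : (P.natDegree : ℝ) ≤ (m : ℝ) := by exact_mod_cast hPm
  rcases Nat.eq_zero_or_pos (Q.natDegree + P.natDegree) with hk0 | hk1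
  · -- both P and Q are constants
    have hHPa : polyHeight P = |Polynomial.aeval ξ P| := by
      obtain ⟨a, ha⟩ := Polynomial.natDegree_eq_zero.mp (show P.natDegree = 0 by omega)
      have ha0 : a ≠ 0 := by rintro rfl; simp at ha; exact hP ha.symm
      rw [← ha, polyHeight_C ha0]
      simp
    have hHQb : polyHeight Q = |Polynomial.aeval ξ Q| := by
      obtain ⟨b, hb⟩ := Polynomial.natDegree_eq_zero.mp (show Q.natDegree = 0 by omega)
      have hb0 : b ≠ 0 := by rintro rfl; simp at hb; exact hQ hb.symm
      rw [← hb, polyHeight_C hb0]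
      simp
    have h1 : polyHeight P ^ (-((n : ℝ) - 1)) ≤ polyHeight P := by
      calc polyHeight P ^ (-((n : ℝ) - 1)) ≤ polyHeight P ^ (1 : ℝ) :=
            Real.rpow_le_rpow_of_exponent_le hHP1
              (by have : (0:ℝ) ≤ (n:ℝ) := Nat.cast_nonneg n; linarith)
        _ = polyHeight P := Real.rpow_one _
    have h2 : polyHeight Q ^ (-((m : ℝ) - 1)) ≤ polyHeight Q := by
      calc polyHeight Q ^ (-((m : ℝ) - 1)) ≤ polyHeight Q ^ (1 : ℝ) :=
            Real.rpow_le_rpow_of_exponent_le hHQ1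
              (by have : (0:ℝ) ≤ (m:ℝ) := Nat.cast_nonneg m; linarith)
        _ = polyHeight Q := Real.rpow_one _
    calc ((((m + n + 1) * Nat.factorial (m + n) : ℕ) : ℝ) * (max 1 |ξ|) ^ (m + n))⁻¹ *
          polyHeight P ^ (-((n : ℝ) - 1)) * polyHeight Q ^ (-((m : ℝ) - 1)) *
          (min (polyHeight P) (polyHeight Q) / (polyHeight P * polyHeight Q))
        ≤ 1 * polyHeight P * polyHeight Q *
          (min (polyHeight P) (polyHeight Q) / (polyHeight P * polyHeight Q)) := by
          refine mul_le_mul_of_nonneg_right ?_ hmin_nonneg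
          refine mul_le_mul ?_ h2 (Real.rpow_nonneg hHQ0.le _)
            (mul_nonneg zero_le_one hHP0.le)
          exact mul_le_mul hc1 h1 (Real.rpow_nonneg hHP0.le _) zero_le_one
      _ = min (polyHeight P) (polyHeight Q) := by
          field_simp
      _ ≤ polyHeight P := min_le_left _ _
      _ = |Polynomial.aeval ξ P| := hHPa
      _ ≤ max |Polynomial.aeval ξ P| |Polynomial.aeval ξ Q| := le_max_left _ _
  · -- main case: use the resultant-type bound
    have hkey := key_ineq ξ P Q hP hQ hco hk1
    set X : ℝ := ((Q.natDegree : ℝ) + (P.natDegree : ℝ)) *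
      ((Q.natDegree + P.natDegree).factorial : ℝ) *
      (max 1 |ξ|) ^ (Q.natDegree + P.natDegree) with hXdef
    have hX0 : 0 < X := by
      rw [hXdef]
      have h1 : (0:ℝ) < (Q.natDegree : ℝ) + (P.natDegree : ℝ) := by
        have : (0:ℝ) < ((Q.natDegree + P.natDegree : ℕ) : ℝ) := by exact_mod_cast hk1
        push_cast at this
        linarith
      have h2 : (0:ℝ) < ((Q.natDegree + P.natDegree).factorial : ℝ) := by
        exact_mod_cast (Q.natDegree + P.natDegree).factorial_pos
      positivity
    have hD0 : 0 < X * polyHeight P ^ Q.natDegree * polyHeight Q ^ P.natDegree := by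
      have := pow_pos hHP0 Q.natDegree
      have := pow_pos hHQ0 P.natDegree
      positivity
    have hcX : ((((m + n + 1) * Nat.factorial (m + n) : ℕ) : ℝ) *
        (max 1 |ξ|) ^ (m + n))⁻¹ * X ≤ 1 := by
      have hXE : X ≤ (((m + n + 1) * Nat.factorial (m + n) : ℕ) : ℝ) *
          (max 1 |ξ|) ^ (m + n) := by
        rw [hXdef]
        have hle : Q.natDegree + P.natDegree ≤ m + n := by omega
        have b1 : (Q.natDegree : ℝ) + (P.natDegree : ℝ) ≤ ((m + n + 1 : ℕ) : ℝ) := by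
          push_cast
          linarith
        have b2 : ((Q.natDegree + P.natDegree).factorial : ℝ)
            ≤ ((Nat.factorial (m + n) : ℕ) : ℝ) := by
          exact_mod_cast Nat.factorial_le hle
        have b3 : (max 1 |ξ|) ^ (Q.natDegree + P.natDegree) ≤ (max 1 |ξ|) ^ (m + n) :=
          pow_le_pow_right₀ hT1 hle
        have hcast : (((m + n + 1) * Nat.factorial (m + n) : ℕ) : ℝ)
            = ((m + n + 1 : ℕ) : ℝ) * ((Nat.factorial (m + n) : ℕ) : ℝ) := by push_cast; ring
        rw [hcast]
        have hf0 : (0:ℝ) ≤ ((Q.natDegree + P.natDegree).factorial : ℝ) := by positivity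
        have ht0 : (0:ℝ) ≤ (max 1 |ξ|) ^ (Q.natDegree + P.natDegree) := by positivity
        have hqp0 : (0:ℝ) ≤ (Q.natDegree : ℝ) + (P.natDegree : ℝ) := by positivity
        refine mul_le_mul (mul_le_mul b1 b2 hf0 (by positivity)) b3 ht0 (by positivity)
      calc ((((m + n + 1) * Nat.factorial (m + n) : ℕ) : ℝ) * (max 1 |ξ|) ^ (m + n))⁻¹ * X
          ≤ ((((m + n + 1) * Nat.factorial (m + n) : ℕ) : ℝ) * (max 1 |ξ|) ^ (m + n))⁻¹ *
            ((((m + n + 1) * Nat.factorial (m + n) : ℕ) : ℝ) * (max 1 |ξ|) ^ (m + n)) :=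
            mul_le_mul_of_nonneg_left hXE hc0
        _ = 1 := inv_mul_cancel₀ hE0.ne'
    have h1 : polyHeight P ^ (-((n : ℝ) - 1)) * polyHeight P ^ Q.natDegree
        ≤ polyHeight P := by
      have e1 : polyHeight P ^ (-((n : ℝ) - 1)) * polyHeight P ^ Q.natDegree
          = polyHeight P ^ (-((n : ℝ) - 1) + (Q.natDegree : ℝ)) := by
        rw [← Real.rpow_natCast (polyHeight P) Q.natDegree, ← Real.rpow_add hHP0]
      rw [e1]
      calc polyHeight P ^ (-((n : ℝ) - 1) + (Q.natDegree : ℝ))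
          ≤ polyHeight P ^ (1 : ℝ) :=
            Real.rpow_le_rpow_of_exponent_le hHP1 (by linarith)
        _ = polyHeight P := Real.rpow_one _
    have h2 : polyHeight Q ^ (-((m : ℝ) - 1)) * polyHeight Q ^ P.natDegree
        ≤ polyHeight Q := by
      have e1 : polyHeight Q ^ (-((m : ℝ) - 1)) * polyHeight Q ^ P.natDegree
          = polyHeight Q ^ (-((m : ℝ) - 1) + (P.natDegree : ℝ)) := by
        rw [← Real.rpow_natCast (polyHeight Q) P.natDegree, ← Real.rpow_add hHQ0]
      rw [e1]
      calc polyHeight Q ^ (-((m : ℝ) - 1) + (P.natDegree : ℝ))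
          ≤ polyHeight Q ^ (1 : ℝ) :=
            Real.rpow_le_rpow_of_exponent_le hHQ1 (by linarith)
        _ = polyHeight Q := Real.rpow_one _
    have hs : ((((m + n + 1) * Nat.factorial (m + n) : ℕ) : ℝ) *
          (max 1 |ξ|) ^ (m + n))⁻¹ *
          polyHeight P ^ (-((n : ℝ) - 1)) * polyHeight Q ^ (-((m : ℝ) - 1)) *
          (min (polyHeight P) (polyHeight Q) / (polyHeight P * polyHeight Q)) *
          (X * polyHeight P ^ Q.natDegree * polyHeight Q ^ P.natDegree)
        ≤ min (polyHeight P) (polyHeight Q) := by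
      have e1 : ((((m + n + 1) * Nat.factorial (m + n) : ℕ) : ℝ) *
            (max 1 |ξ|) ^ (m + n))⁻¹ *
            polyHeight P ^ (-((n : ℝ) - 1)) * polyHeight Q ^ (-((m : ℝ) - 1)) *
            (min (polyHeight P) (polyHeight Q) / (polyHeight P * polyHeight Q)) *
            (X * polyHeight P ^ Q.natDegree * polyHeight Q ^ P.natDegree)
          = (((((m + n + 1) * Nat.factorial (m + n) : ℕ) : ℝ) *
              (max 1 |ξ|) ^ (m + n))⁻¹ * X) *
            (polyHeight P ^ (-((n : ℝ) - 1)) * polyHeight P ^ Q.natDegree) *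
            (polyHeight Q ^ (-((m : ℝ) - 1)) * polyHeight Q ^ P.natDegree) *
            (min (polyHeight P) (polyHeight Q) / (polyHeight P * polyHeight Q)) := by
        ring
      rw [e1]
      calc (((((m + n + 1) * Nat.factorial (m + n) : ℕ) : ℝ) *
              (max 1 |ξ|) ^ (m + n))⁻¹ * X) *
            (polyHeight P ^ (-((n : ℝ) - 1)) * polyHeight P ^ Q.natDegree) *
            (polyHeight Q ^ (-((m : ℝ) - 1)) * polyHeight Q ^ P.natDegree) *
            (min (polyHeight P) (polyHeight Q) / (polyHeight P * polyHeight Q))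
          ≤ 1 * polyHeight P * polyHeight Q *
            (min (polyHeight P) (polyHeight Q) / (polyHeight P * polyHeight Q)) := by
            refine mul_le_mul_of_nonneg_right ?_ hmin_nonneg
            refine mul_le_mul ?_ h2
              (mul_nonneg (Real.rpow_nonneg hHQ0.le _) (pow_pos hHQ0 _).le)
              (mul_nonneg zero_le_one hHP0.le)
            refine mul_le_mul hcX h1
              (mul_nonneg (Real.rpow_nonneg hHP0.le _) (pow_pos hHP0 _).le) zero_le_one
        _ = min (polyHeight P) (polyHeight Q) := by field_simp
    have hfin := hs.trans hkey
    have hform : ((((Q.natDegree : ℝ) + (P.natDegree : ℝ)) *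
          (((Q.natDegree + P.natDegree).factorial : ℕ) : ℝ) *
          (max 1 |ξ|) ^ (Q.natDegree + P.natDegree) *
          polyHeight P ^ Q.natDegree * polyHeight Q ^ P.natDegree) *
          max |Polynomial.aeval ξ P| |Polynomial.aeval ξ Q|)
        = (X * polyHeight P ^ Q.natDegree * polyHeight Q ^ P.natDegree) *
          max |Polynomial.aeval ξ P| |Polynomial.aeval ξ Q| := by
      rw [hXdef]
    rw [hform] at hfin
    -- hfin : LHS * D ≤ D * R
    have := hfin.trans (le_of_eq (mul_comm _ _))
    exact le_of_mul_le_mul_right this hD0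
end

section
/- Let n ≥ 2 be an integer. Suppose real numbers w ≥ ŵ ≥ n satisfy both ŵ ≤ n·w/(w - n + 1) and w ≥ (n-1)(ŵ² - ŵ)/(1 + (n-2)ŵ). Then ŵ ≤ n - 1/2 + sqrt(n² - 2n + 5/4). -/
theorem stmt7 (n : ℕ) (hn : 2 ≤ n) (w wh : ℝ) (h1 : wh ≤ w) (h2 : (n : ℝ) ≤ wh)
    (h3 : wh ≤ n * w / (w - n + 1))
    (h4 : ((n : ℝ) - 1) * (wh ^ 2 - wh) / (1 + ((n : ℝ) - 2) * wh) ≤ w) :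
    wh ≤ (n : ℝ) - 1 / 2 + Real.sqrt ((n : ℝ) ^ 2 - 2 * n + 5 / 4) := by
  have hN : (2 : ℝ) ≤ (n : ℝ) := by exact_mod_cast hn
  have hw1 : (0 : ℝ) < w - n + 1 := by linarith
  have hA : wh * (w - n + 1) ≤ n * w := by
    have := (le_div_iff₀ hw1).mp h3
    linarith
  have hden : (0 : ℝ) < 1 + ((n : ℝ) - 2) * wh := by nlinarith
  have hB : ((n : ℝ) - 1) * (wh ^ 2 - wh) ≤ w * (1 + ((n : ℝ) - 2) * wh) :=
    (div_le_iff₀ hden).mp h4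
  have hq : wh ^ 2 - (2 * (n : ℝ) - 1) * wh + ((n : ℝ) - 1) ≤ 0 := by
    nlinarith [mul_le_mul_of_nonneg_right hA hden.le,
      mul_le_mul_of_nonneg_right hB (sub_nonneg.mpr h2),
      mul_pos (by linarith : (0:ℝ) < (n:ℝ) - 1) (by linarith : (0:ℝ) < wh)]
  have hd : (0 : ℝ) ≤ (n : ℝ) ^ 2 - 2 * n + 5 / 4 := by nlinarith
  have hs2 : Real.sqrt ((n : ℝ) ^ 2 - 2 * n + 5 / 4) ^ 2 = (n : ℝ) ^ 2 - 2 * n + 5 / 4 :=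
    Real.sq_sqrt hd
  have hsn : 0 ≤ Real.sqrt ((n : ℝ) ^ 2 - 2 * n + 5 / 4) := Real.sqrt_nonneg _
  nlinarith [sq_nonneg (wh - (n : ℝ) + 1 / 2 + Real.sqrt ((n : ℝ) ^ 2 - 2 * n + 5 / 4))]
end

section
/- Suppose real numbers w ≥ ŵ ≥ 3 satisfy ŵ ≤ 3w/(w-2) and w ≥ ŵ·(sqrt(4ŵ - 3) - 1)/2. Then ŵ ≤ 3 + sqrt(2). -/
theorem stmt8 (w wh : ℝ) (h1 : wh ≤ w) (h2 : (3 : ℝ) ≤ wh)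
    (h3 : wh ≤ 3 * w / (w - 2))
    (h4 : wh * (Real.sqrt (4 * wh - 3) - 1) / 2 ≤ w) :
    wh ≤ 3 + Real.sqrt 2 := by
  by_contra hc
  push_neg at hc
  have hs2 : Real.sqrt 2 ^ 2 = 2 := Real.sq_sqrt (by norm_num)
  have hs2nn : 0 ≤ Real.sqrt 2 := Real.sqrt_nonneg 2
  have ht2 : 2 < (wh - 3) ^ 2 := by nlinarith
  have hw3 : 3 < wh := by nlinarith
  have hw2 : 0 < w - 2 := by linarith
  rw [le_div_iff₀ hw2] at h3
  have key : w * (wh - 3) ≤ 2 * wh := by nlinarith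
  set s := Real.sqrt (4 * wh - 3) with hsdef
  have hs : s ^ 2 = 4 * wh - 3 := Real.sq_sqrt (by linarith)
  have hsnn : 0 ≤ s := Real.sqrt_nonneg _
  -- (s-1)*(wh-3) ≤ 4
  have h5 : wh * (s - 1) * (wh - 3) ≤ 4 * wh := by nlinarith
  have h6 : (s - 1) * (wh - 3) ≤ 4 := by
    have hwpos : 0 < wh := by linarith
    nlinarith
  have h7 : s * (wh - 3) ≤ wh + 1 := by nlinarith
  nlinarith [sq_nonneg (s * (wh - 3)), mul_nonneg hsnn (le_of_lt (by linarith : (0:ℝ) < wh - 3)), sq_nonneg (wh - 3)]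
end
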